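/- Let X be a reflexive real Banach space, H a real Hilbert space, and j : X → H an injective continuous linear map with dense range; define ι : H → X* by (ι p)(x) = ⟨j x, p⟩_H. Suppose L : X × X* → ℝ ∪ {+∞} is an anti-selfdual Lagrangian on X such that (1) for every x ∈ X the map p ↦ L(x,p) is continuous on X*, and (2) there exists x₀ ∈ X such that p ↦ L(x₀,p) is bounded on bounded subsets of X*. Then the Lagrangian M : H × H → ℝ ∪ {+∞} defined by M(j x, p) = L(x, ι p) for x ∈ X and p ∈ H, and M(h, p) = +∞ whenever h ∉ j(X), is anti-selfdual on H × H (with H identified with its dual via its inner product). -/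

import Mathlib

open scoped RealInnerProductSpace

noncomputable section

/-- Convexity for `EReal`-valued functions. -/
def ERealConvexOn {E : Type*} [AddCommGroup E] [Module ℝ E] (f : E → EReal) : Prop :=
  ∀ x y : E, ∀ s t : ℝ, 0 ≤ s → 0 ≤ t → s + t = 1 →
    f (s • x + t • y) ≤ (s : EReal) * f x + (t : EReal) * f y

/-- The Legendre–Fenchel dual, in both variables, of a Lagrangian on a Banach space `X`. -/
def lagrangianDual {X : Type*} [NormedAddCommGroup X] [NormedSpace ℝ X]
    (L : X × (X →L[ℝ] ℝ) → EReal) (q : X →L[ℝ] ℝ) (y : X) : EReal :=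
  ⨆ x : X, ⨆ p : X →L[ℝ] ℝ, ((q x + p y : ℝ) : EReal) - L (x, p)

/-- A Lagrangian on a Banach space is anti-selfdual if `L*(p,x) = L(−x,−p)`. -/
def IsASD {X : Type*} [NormedAddCommGroup X] [NormedSpace ℝ X]
    (L : X × (X →L[ℝ] ℝ) → EReal) : Prop :=
  ∀ (p : X →L[ℝ] ℝ) (x : X), lagrangianDual L p x = L (-x, -p)

/-- The Legendre–Fenchel dual, in both variables, of a Lagrangian on a Hilbert space `H`. -/
def lagrangianDualH {H : Type*} [NormedAddCommGroup H] [InnerProductSpace ℝ H]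
    (M : H × H → EReal) (q y : H) : EReal :=
  ⨆ x : H, ⨆ p : H, ((⟪q, x⟫ + ⟪y, p⟫ : ℝ) : EReal) - M (x, p)

/-- A Lagrangian on a Hilbert space is anti-selfdual if `M*(p,x) = M(−x,−p)`. -/
def IsASDH {H : Type*} [NormedAddCommGroup H] [InnerProductSpace ℝ H]
    (M : H × H → EReal) : Prop :=
  ∀ p x : H, lagrangianDualH M p x = M (-x, -p)

/-- Reflexivity of a normed space. -/
def IsReflexiveSpace (X : Type*) [NormedAddCommGroup X] [NormedSpace ℝ X] : Prop :=
  ∀ F : (X →L[ℝ] ℝ) →L[ℝ] ℝ, ∃ x : X, ∀ p : X →L[ℝ] ℝ, F p = p x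

lemma my_ereal_cont_sub {β : Type*} [TopologicalSpace β] {u : β → ℝ} (hu : Continuous u)
    {v : β → EReal} (hv : Continuous v) :
    Continuous fun b => ((u b : ℝ) : EReal) - v b := by
  rw [continuous_iff_continuousAt]
  intro b
  have h1 : ContinuousAt (fun p : EReal × EReal => p.1 + p.2) ((u b : EReal), -(v b)) :=
    EReal.continuousAt_add (Or.inl (by simp)) (Or.inl (by simp))
  have h2 : ContinuousAt (fun b => (((u b : ℝ) : EReal), -(v b))) b :=
    ((continuous_coe_real_ereal.comp hu).prodMk hv.neg).continuousAt
  have h3 := Filter.Tendsto.comp h1 h2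
  simpa [sub_eq_add_neg, ContinuousAt, Function.comp_def] using h3

lemma my_isup_denseRange {α β : Type*} [TopologicalSpace β] {f : β → EReal} (hf : Continuous f)
    {e : α → β} (hd : DenseRange e) : (⨆ a, f (e a)) = ⨆ b, f b := by
  refine le_antisymm (iSup_le fun a => le_iSup f (e a)) (iSup_le fun b => ?_)
  have hcl : IsClosed {z : β | f z ≤ ⨆ a, f (e a)} := isClosed_le hf continuous_const
  have hsub : Set.range e ⊆ {z : β | f z ≤ ⨆ a, f (e a)} := by
    rintro _ ⟨a, rfl⟩; exact le_iSup (fun a => f (e a)) a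
  exact hcl.closure_subset_iff.2 hsub (hd b)


set_option maxHeartbeats 2000000 in
/-- lifting an ASD Lagrangian from a reflexive Banach space `X`, densely and
continuously embedded in a Hilbert space `H` via `j`, to an ASD Lagrangian on `H × H`. -/
theorem stmt19 {X H : Type*}
    [NormedAddCommGroup X] [NormedSpace ℝ X] [CompleteSpace X]
    [NormedAddCommGroup H] [InnerProductSpace ℝ H] [CompleteSpace H]
    (hrefl : IsReflexiveSpace X)
    (j : X →L[ℝ] H) (hinj : Function.Injective j) (hdense : DenseRange j)
    (ι : H → (X →L[ℝ] ℝ)) (hι : ∀ (p : H) (x : X), ι p x = ⟪j x, p⟫)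
    (L : X × (X →L[ℝ] ℝ) → EReal)
    (hconv : ERealConvexOn L)
    (hlsc : LowerSemicontinuous L)
    (hproper : ∃ z, L z ≠ ⊤) (hreal : ∀ z, L z ≠ ⊥)
    (hASD : IsASD L)
    -- (1) continuity of `L(x, ·)` on `X*`
    (hcont : ∀ x : X, Continuous fun p : X →L[ℝ] ℝ => L (x, p))
    -- (2) boundedness of `L(x₀, ·)` on bounded sets of `X*`
    (x₀ : X)
    (hbdd : ∀ r : ℝ, ∃ C : ℝ, ∀ p : X →L[ℝ] ℝ, ‖p‖ ≤ r → L (x₀, p) ≤ (C : EReal))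
    (M : H × H → EReal)
    (hM₁ : ∀ (x : X) (p : H), M (j x, p) = L (x, ι p))
    (hM₂ : ∀ h p : H, h ∉ Set.range j → M (h, p) = ⊤) :
    IsASDH M := by
  -- basic facts about ι
  have hj0 : ∀ v : H, (∀ x : X, ⟪j x, v⟫ = 0) → v = 0 := by
    intro v hv
    have hc1 : Continuous fun h : H => ⟪h, v⟫ := continuous_id.inner continuous_const
    have heq : (fun h : H => ⟪h, v⟫) = fun _ => (0 : ℝ) := by
      refine Continuous.ext_on hdense hc1 continuous_const ?_
      rintro _ ⟨x, rfl⟩; exact hv x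
    have : ⟪v, v⟫ = (0 : ℝ) := congrFun heq v
    exact inner_self_eq_zero.mp this
  have hιadd : ∀ a b : H, ι (a + b) = ι a + ι b := by
    intro a b; ext x
    simp [hι, ContinuousLinearMap.add_apply, inner_add_right]
  have hιsmul : ∀ (c : ℝ) (a : H), ι (c • a) = c • ι a := by
    intro c a; ext x
    simp [hι, real_inner_smul_right]
  have hιneg : ∀ a : H, ι (-a) = -ι a := by
    intro a; ext x
    simp [hι, inner_neg_right]
  have hιzero : ι 0 = 0 := by
    ext x; simp [hι]
  have hιinj : Function.Injective ι := by
    intro a b hab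
    have h0 : ι (a - b) = 0 := by
      rw [sub_eq_add_neg, hιadd, hιneg, hab, add_neg_cancel]
    have : ∀ x : X, ⟪j x, a - b⟫ = 0 := by
      intro x
      have := congrArg (fun f : X →L[ℝ] ℝ => f x) h0
      simpa [hι] using this
    have := hj0 _ this
    exact sub_eq_zero.mp this
  -- ι as a linear map
  let ιlin : H →ₗ[ℝ] (X →L[ℝ] ℝ) :=
    { toFun := ι, map_add' := hιadd, map_smul' := hιsmul }
  have hιbound : ∀ a : H, ‖ι a‖ ≤ ‖j‖ * ‖a‖ := by
    intro a
    refine ContinuousLinearMap.opNorm_le_bound _ (by positivity) fun x => ?_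
    rw [hι]
    calc |⟪j x, a⟫| ≤ ‖j x‖ * ‖a‖ := abs_real_inner_le_norm _ _
      _ ≤ (‖j‖ * ‖x‖) * ‖a‖ := by
          have := j.le_opNorm x
          nlinarith [norm_nonneg a, norm_nonneg x, norm_nonneg (j x)]
      _ = ‖j‖ * ‖a‖ * ‖x‖ := by ring
  -- density of the range of ι in X*
  have hdenseι : DenseRange ι := by
    have hmem : ∀ r : X →L[ℝ] ℝ, r ∈ (LinearMap.range ιlin).topologicalClosure := by
      intro r
      by_contra hr
      obtain ⟨f, u, hfs, hfr⟩ :=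
        geometric_hahn_banach_closed_point
          ((LinearMap.range ιlin).topologicalClosure.convex)
          (LinearMap.range ιlin).isClosed_topologicalClosure hr
      have hu0 : (0 : ℝ) < u := by
        have := hfs 0 (Submodule.zero_mem _)
        simpa using this
      have hf0 : ∀ a ∈ (LinearMap.range ιlin).topologicalClosure, f a = 0 := by
        intro a ha
        by_contra h0
        have hmem2 : ((u + 1) / f a) • a ∈ (LinearMap.range ιlin).topologicalClosure :=
          Submodule.smul_mem _ _ ha
        have := hfs _ hmem2
        rw [map_smul, smul_eq_mul, div_mul_cancel₀ _ h0] at this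
        linarith
      obtain ⟨x, hxF⟩ := hrefl f
      have hx0 : x = 0 := by
        have hq : ∀ q : H, ⟪j x, q⟫ = 0 := by
          intro q
          have h1 : f (ι q) = 0 := hf0 _ (Submodule.le_topologicalClosure _ ⟨q, rfl⟩)
          have h2 := hxF (ι q)
          rw [h1] at h2
          rw [hι] at h2
          exact h2.symm
        apply hinj
        rw [map_zero]
        exact inner_self_eq_zero.mp (hq (j x))
      have : f r = 0 := by rw [hxF r, hx0, map_zero]
      linarith [hfr, hu0, this]
    intro r
    have := hmem r
    rw [← SetLike.mem_coe, Submodule.topologicalClosure_coe, LinearMap.coe_range] at this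
    exact this
  intro p xt
  -- reduction of the dual of M to a supremum over X × H
  have hred : lagrangianDualH M p xt
      = ⨆ x : X, ⨆ q : H, ((⟪p, j x⟫ + ⟪xt, q⟫ : ℝ) : EReal) - L (x, ι q) := by
    unfold lagrangianDualH
    apply le_antisymm
    · refine iSup_le fun h => iSup_le fun q => ?_
      by_cases hh : h ∈ Set.range j
      · obtain ⟨x, rfl⟩ := hh
        rw [hM₁]
        exact le_iSup_of_le x (le_iSup_of_le q le_rfl)
      · rw [hM₂ h q hh, EReal.sub_top]
        exact bot_le
    · refine iSup_le fun x => iSup_le fun q => ?_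
      rw [← hM₁]
      exact le_iSup_of_le (j x) (le_iSup_of_le q le_rfl)
  by_cases hx : xt ∈ Set.range j
  · -- Case 1 : xt = j y
    obtain ⟨y, rfl⟩ := hx
    have hstep : ∀ x : X,
        (⨆ q : H, ((⟪p, j x⟫ + ⟪j y, q⟫ : ℝ) : EReal) - L (x, ι q))
          = ⨆ r : X →L[ℝ] ℝ, (((ι p) x + r y : ℝ) : EReal) - L (x, r) := by
      intro x
      have hgc : Continuous fun r : X →L[ℝ] ℝ => (((ι p) x + r y : ℝ) : EReal) - L (x, r) :=
        my_ereal_cont_sub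
          (continuous_const.add (ContinuousLinearMap.apply ℝ ℝ y).continuous) (hcont x)
      rw [← my_isup_denseRange hgc hdenseι]
      refine iSup_congr fun q => ?_
      rw [hι p x, hι q y, real_inner_comm (j x) p]
    calc lagrangianDualH M p (j y)
        = ⨆ x : X, ⨆ q : H, ((⟪p, j x⟫ + ⟪j y, q⟫ : ℝ) : EReal) - L (x, ι q) := hred
      _ = ⨆ x : X, ⨆ r : X →L[ℝ] ℝ, (((ι p) x + r y : ℝ) : EReal) - L (x, r) :=
          iSup_congr hstep
      _ = L (-y, -(ι p)) := hASD (ι p) y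
      _ = L (-y, ι (-p)) := by rw [hιneg]
      _ = M (j (-y), -p) := (hM₁ _ _).symm
      _ = M (-(j y), -p) := by rw [map_neg]
  · -- Case 2 : xt ∉ range j, both sides are ⊤
    have hnx : -xt ∉ Set.range j := by
      rintro ⟨z, hz⟩
      exact hx ⟨-z, by rw [map_neg, hz, neg_neg]⟩
    rw [hM₂ _ _ hnx, hred]
    by_contra hne
    have hSlt : ∀ (x : X) (q : H), ((⟪p, j x⟫ + ⟪xt, q⟫ : ℝ) : EReal) - L (x, ι q)
        ≤ ⨆ x : X, ⨆ q : H, ((⟪p, j x⟫ + ⟪xt, q⟫ : ℝ) : EReal) - L (x, ι q) :=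
      fun x q => le_iSup_of_le x (le_iSup_of_le q le_rfl)
    obtain ⟨C₀, hC₀⟩ := hbdd 0
    have hL0t : L (x₀, 0) ≠ ⊤ := ne_top_of_le_ne_top (EReal.coe_ne_top C₀) (hC₀ 0 (by simp))
    obtain ⟨ℓ₀, hℓ₀⟩ : ∃ ℓ : ℝ, L (x₀, 0) = (ℓ : EReal) :=
      ⟨_, (EReal.coe_toReal hL0t (hreal _)).symm⟩
    have hSbot : (⨆ x : X, ⨆ q : H, ((⟪p, j x⟫ + ⟪xt, q⟫ : ℝ) : EReal) - L (x, ι q)) ≠ ⊥ := by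
      intro hS
      have h1 := hSlt x₀ 0
      rw [hS, le_bot_iff, inner_zero_right, hιzero, hℓ₀, ← EReal.coe_sub] at h1
      exact EReal.coe_ne_bot _ h1
    obtain ⟨s, hs⟩ : ∃ s : ℝ,
        (⨆ x : X, ⨆ q : H, ((⟪p, j x⟫ + ⟪xt, q⟫ : ℝ) : EReal) - L (x, ι q)) = (s : EReal) :=
      ⟨_, (EReal.coe_toReal hne hSbot).symm⟩
    obtain ⟨C₁, hC₁⟩ := hbdd 1
    -- the key bound on the unit ball of ι
    have hKey : ∀ q : H, ‖ι q‖ ≤ 1 → ⟪xt, q⟫ ≤ s - ⟪p, j x₀⟫ + C₁ := by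
      intro q hq
      have hL : L (x₀, ι q) ≤ (C₁ : EReal) := hC₁ _ hq
      have hLt : L (x₀, ι q) ≠ ⊤ := ne_top_of_le_ne_top (EReal.coe_ne_top C₁) hL
      obtain ⟨ℓ, hℓ⟩ : ∃ ℓ : ℝ, L (x₀, ι q) = (ℓ : EReal) :=
        ⟨_, (EReal.coe_toReal hLt (hreal _)).symm⟩
      have h1 := hSlt x₀ q
      rw [hℓ, hs, ← EReal.coe_sub, EReal.coe_le_coe_iff] at h1
      have hℓC : ℓ ≤ C₁ := by rw [hℓ] at hL; exact_mod_cast hL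
      linarith
    set K : ℝ := max (s - ⟪p, j x₀⟫ + C₁) 0 with hK
    have hK0 : (0 : ℝ) ≤ K := le_max_right _ _
    have hb : ∀ q : H, ‖ι q‖ ≤ 1 → ⟪xt, q⟫ ≤ K :=
      fun q h => (hKey q h).trans (le_max_left _ _)
    have habs : ∀ q : H, |⟪xt, q⟫| ≤ K * ‖ι q‖ := by
      intro q
      by_cases hq0 : ι q = 0
      · have hq : q = 0 := by
          apply hj0
          intro x
          have := congrArg (fun f : X →L[ℝ] ℝ => f x) hq0
          simpa [hι] using this
        rw [hq, inner_zero_right, abs_zero]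
        positivity
      · have hpos : (0 : ℝ) < ‖ι q‖ := norm_pos_iff.mpr hq0
        have hns := norm_smul (‖ι q‖⁻¹) (ι q)
        have hone : ‖(‖ι q‖⁻¹ : ℝ) • ι q‖ ≤ 1 := by
          rw [hns, Real.norm_eq_abs, abs_of_nonneg (inv_nonneg.mpr hpos.le),
            inv_mul_cancel₀ hpos.ne']
        have hinv : ‖ι (‖ι q‖⁻¹ • q)‖ ≤ 1 := by rw [hιsmul]; exact hone
        have hinv' : ‖ι (‖ι q‖⁻¹ • -q)‖ ≤ 1 := by
          rw [hιsmul, hιneg]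
          have : ‖(‖ι q‖⁻¹ : ℝ) • -ι q‖ = ‖(‖ι q‖⁻¹ : ℝ) • ι q‖ := by
            rw [smul_neg, norm_neg]
          rw [this]; exact hone
        have h1 := hb _ hinv
        have h2 := hb _ hinv'
        rw [real_inner_smul_right] at h1
        rw [real_inner_smul_right, inner_neg_right] at h2
        have h1' : ⟪xt, q⟫ ≤ K * ‖ι q‖ := by
          have h3 := mul_le_mul_of_nonneg_left h1 hpos.le
          rw [← mul_assoc, mul_inv_cancel₀ hpos.ne', one_mul, mul_comm] at h3
          exact h3
        have h2' : -⟪xt, q⟫ ≤ K * ‖ι q‖ := by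
          have h3 := mul_le_mul_of_nonneg_left h2 hpos.le
          rw [← mul_assoc, mul_inv_cancel₀ hpos.ne', one_mul, mul_comm] at h3
          exact h3
        exact abs_le.2 ⟨by linarith, h1'⟩
    -- build the continuous linear functional on the range of ι
    have hιlininj : Function.Injective ιlin := hιinj
    let e := LinearEquiv.ofInjective ιlin hιlininj
    let φ : H →ₗ[ℝ] ℝ :=
      { toFun := fun q => ⟪xt, q⟫
        map_add' := fun a b => inner_add_right _ _ _
        map_smul' := fun c a => real_inner_smul_right _ _ _ }
    let flin : LinearMap.range ιlin →ₗ[ℝ] ℝ := φ.comp e.symm.toLinearMap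
    have hrcoe : ∀ r : LinearMap.range ιlin, ι (e.symm r) = (r : X →L[ℝ] ℝ) :=
      fun r => congrArg Subtype.val (e.apply_symm_apply r)
    have hflin : ∀ r : LinearMap.range ιlin, ‖flin r‖ ≤ K * ‖r‖ := by
      intro r
      have h1 := habs (e.symm r)
      rw [hrcoe r] at h1
      simpa [flin, φ, Real.norm_eq_abs] using h1
    let fC : LinearMap.range ιlin →L[ℝ] ℝ := LinearMap.mkContinuous (𝕜 := ℝ) (𝕜₂ := ℝ) (σ := RingHom.id ℝ) (E := LinearMap.range ιlin) (F := ℝ) flin K hflin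
    obtain ⟨g, hg, -⟩ := exists_extension_norm_eq (LinearMap.range ιlin) fC
    obtain ⟨y, hy⟩ := hrefl g
    have hyq : ∀ q : H, ⟪j y, q⟫ = ⟪xt, q⟫ := by
      intro q
      have hmemq : ι q ∈ LinearMap.range ιlin := ⟨q, rfl⟩
      have h1 : g (ι q) = fC ⟨ι q, hmemq⟩ := hg ⟨ι q, hmemq⟩
      have h2 : fC ⟨ι q, hmemq⟩ = ⟪xt, (e.symm ⟨ι q, hmemq⟩ : H)⟫ := rfl
      have h3 : (e.symm ⟨ι q, hmemq⟩ : H) = q := by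
        apply hιinj
        exact hrcoe ⟨ι q, hmemq⟩
      have h4 := hy (ι q)
      rw [hι q y] at h4
      rw [h1, h2, h3] at h4
      exact h4.symm
    refine hx ⟨y, ?_⟩
    have hz : ⟪j y - xt, j y - xt⟫ = (0 : ℝ) := by
      rw [inner_sub_left, hyq (j y - xt), sub_self]
    exact sub_eq_zero.mp (inner_self_eq_zero.mp hz)
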